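/- Let K be a finite subset of ℤ and p : K → ℝ. Let φ : ℝ → ℝ have compact support and let c : ℤ → ℝ satisfy ∑_{k∈K} p(k) c(i+k) = 0 for all i ∈ ℤ. Then g(x) = ∑_{i∈ℤ} c(i) φ(x−i) satisfies ∑_{k∈K} p(k) g(x+k) = 0 for all x ∈ ℝ. -/

import Mathlib

private lemma support_finite_aux (φ : ℝ → ℝ) (hφ : HasCompactSupport φ) (x : ℝ) :
    (Function.support fun i : ℤ => φ (x - (i : ℝ))).Finite := by
  obtain ⟨r, hr⟩ := hφ.isCompact.isBounded.subset_closedBall 0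
  apply Set.Finite.subset (Set.finite_Icc ⌈x - r⌉ ⌊x + r⌋)
  intro i hi
  have hmem : x - (i : ℝ) ∈ Metric.closedBall (0 : ℝ) r := by
    apply hr
    exact subset_tsupport φ hi
  rw [Metric.mem_closedBall, Real.dist_eq, sub_zero, abs_sub_le_iff] at hmem
  constructor
  · exact Int.ceil_le.mpr (by linarith [hmem.1])
  · exact Int.le_floor.mpr (by linarith [hmem.2])

/-- univariate version of the model-preservation proposition.
If `c : ℤ → ℝ` satisfies the linear model `(K, p)` and `φ` has compact support,
then `g(x) = ∑_{i∈ℤ} c(i) φ(x−i)` satisfies the model. -/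
theorem univariate_model_preservation
    (K : Finset ℤ) (p : ℤ → ℝ) (φ : ℝ → ℝ)
    (hφ : HasCompactSupport φ) (c : ℤ → ℝ)
    (hc : ∀ i : ℤ, ∑ k ∈ K, p k * c (i + k) = 0)
    (g : ℝ → ℝ)
    (hg : ∀ x : ℝ, g x = ∑ᶠ i : ℤ, c i * φ (x - i)) :
    ∀ x : ℝ, ∑ k ∈ K, p k * g (x + k) = 0 := by
  intro x
  have hfin : ∀ k : ℤ,
      (Function.support fun j : ℤ => c (j + k) * φ (x - (j : ℝ))).Finite := fun k =>
    (support_finite_aux φ hφ x).subset (fun j hj => by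
      simp only [Function.mem_support] at hj ⊢
      exact fun h => hj (by rw [h, mul_zero]))
  have step1 : ∀ k : ℤ, g (x + k) = ∑ᶠ j : ℤ, c (j + k) * φ (x - j) := by
    intro k
    rw [hg (x + k)]
    rw [← finsum_comp_equiv (Equiv.addRight k)]
    apply finsum_congr
    intro j
    simp only [Equiv.coe_addRight]
    congr 2
    push_cast
    ring
  calc ∑ k ∈ K, p k * g (x + k)
      = ∑ k ∈ K, ∑ᶠ j : ℤ, p k * (c (j + k) * φ (x - j)) := by
        refine Finset.sum_congr rfl fun k _ => ?_
        rw [step1 k, mul_finsum _ _]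
    _ = ∑ᶠ j : ℤ, ∑ k ∈ K, p k * (c (j + k) * φ (x - j)) := by
        refine (finsum_sum_comm K (fun j k => p k * (c (j + k) * φ (x - j))) ?_).symm
        intro k _
        exact ((hfin k).subset (Function.support_mul_subset_right _ _))
    _ = 0 := by
        rw [finsum_eq_zero_of_forall_eq_zero]
        intro j
        have := hc j
        calc ∑ k ∈ K, p k * (c (j + k) * φ (x - j))
            = (∑ k ∈ K, p k * c (j + k)) * φ (x - j) := by
              rw [Finset.sum_mul]; exact Finset.sum_congr rfl fun k _ => by ring
          _ = 0 := by rw [this, zero_mul]
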